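/- Let f : ℝ^d → ℝ be twice continuously differentiable with L_H-Lipschitz continuous Hessian. Let x ∈ ℝ^d, g = ∇f(x), H = ∇²f(x), and let s ∈ ℝ^d with residual r = −g − Hs. Suppose for constants σ > 0, L_g > 0, θ > 0 and 0 < ε ≤ 1 that: ⟨r, Hr⟩ ≥ σ‖r‖², ‖Hs‖ ≤ L_g‖s‖, and ‖Hr‖ ≤ θ√ε·‖Hs‖. Then ‖s‖ ≥ (2σ/(θL_g + √(θ²L_g² + 2σ²L_H)))·√ε·min{‖∇f(x + s)‖/ε, 1}. -/

import Mathlib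

open scoped RealInnerProductSpace

/-- The Hessian of `f : ℝ^d → ℝ` at `x`, as the derivative of the gradient. -/
noncomputable def hessian {d : ℕ} (f : EuclideanSpace ℝ (Fin d) → ℝ)
    (x : EuclideanSpace ℝ (Fin d)) :
    EuclideanSpace ℝ (Fin d) →L[ℝ] EuclideanSpace ℝ (Fin d) :=
  fderiv ℝ (gradient f) x

lemma grad_taylor {d : ℕ} (f : EuclideanSpace ℝ (Fin d) → ℝ) (LH : ℝ)
    (hf : ContDiff ℝ 2 f)
    (hLip : ∀ x y : EuclideanSpace ℝ (Fin d), ‖hessian f x - hessian f y‖ ≤ LH * ‖x - y‖)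
    (x s : EuclideanSpace ℝ (Fin d)) :
    ‖gradient f (x + s) - gradient f x - hessian f x s‖ ≤ LH / 2 * ‖s‖ ^ 2 := by
  have h1 : ContDiff ℝ 1 (fderiv ℝ f) := hf.fderiv_right (by norm_num)
  have hdg : Differentiable ℝ (gradient f) := by
    have : gradient f = fun y =>
        (InnerProductSpace.toDual ℝ (EuclideanSpace ℝ (Fin d))).symm (fderiv ℝ f y) := rfl
    rw [this]
    exact ((InnerProductSpace.toDual ℝ
      (EuclideanSpace ℝ (Fin d))).symm.toContinuousLinearEquiv.differentiable).comp
      (h1.differentiable (by norm_num))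
  have hH : ∀ y, HasFDerivAt (gradient f) (hessian f y) y := fun y => (hdg y).hasFDerivAt
  set φ : ℝ → EuclideanSpace ℝ (Fin d) :=
    fun t => gradient f (x + t • s) - gradient f x - t • (hessian f x s) with hφdef
  set φ' : ℝ → EuclideanSpace ℝ (Fin d) :=
    fun t => hessian f (x + t • s) s - hessian f x s with hφ'def
  have hφ : ∀ t : ℝ, HasDerivAt φ (φ' t) t := by
    intro t
    have hc : HasDerivAt (fun t : ℝ => x + t • s) s t := by
      simpa using ((hasDerivAt_id t).smul_const s).const_add x
    have hgc : HasDerivAt (fun t : ℝ => gradient f (x + t • s))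
        (hessian f (x + t • s) s) t := by
      have := (hH (x + t • s)).comp_hasDerivAt t hc
      exact this
    have h2 : HasDerivAt (fun t : ℝ => t • (hessian f x s)) (hessian f x s) t := by
      simpa using (hasDerivAt_id t).smul_const (hessian f x s)
    exact (hgc.sub_const (gradient f x)).sub h2
  have bound : ∀ t ∈ Set.Ico (0:ℝ) 1, ‖φ' t‖ ≤ LH * ‖s‖ ^ 2 * t := by
    intro t ht
    have he : φ' t = (hessian f (x + t • s) - hessian f x) s := by
      simp [hφ'def, ContinuousLinearMap.sub_apply]
    rw [he]
    calc ‖(hessian f (x + t • s) - hessian f x) s‖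
        ≤ ‖hessian f (x + t • s) - hessian f x‖ * ‖s‖ :=
          ContinuousLinearMap.le_opNorm _ _
      _ ≤ (LH * ‖x + t • s - x‖) * ‖s‖ :=
          mul_le_mul_of_nonneg_right (hLip _ _) (norm_nonneg s)
      _ = LH * ‖s‖ ^ 2 * t := by
          rw [add_sub_cancel_left, norm_smul, Real.norm_eq_abs, abs_of_nonneg ht.1]
          ring
  have hB : ∀ t : ℝ, HasDerivAt (fun t : ℝ => LH * ‖s‖ ^ 2 / 2 * t ^ 2)
      (LH * ‖s‖ ^ 2 * t) t := by
    intro t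
    have := (hasDerivAt_pow 2 t).const_mul (LH * ‖s‖ ^ 2 / 2)
    refine this.congr_deriv ?_
    rw [show (2:ℕ) - 1 = 1 from rfl]
    push_cast
    ring
  have main := image_norm_le_of_norm_deriv_right_le_deriv_boundary
    (f := φ) (f' := φ') (a := 0) (b := 1)
    (fun t _ => (hφ t).continuousAt.continuousWithinAt)
    (fun t _ => (hφ t).hasDerivWithinAt)
    (by simp [hφdef]) hB bound
  have h1' := main (by norm_num : (1:ℝ) ∈ Set.Icc 0 1)
  have hφ1 : φ 1 = gradient f (x + s) - gradient f x - hessian f x s := by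
    simp [hφdef]
  rw [hφ1] at h1'
  calc ‖gradient f (x + s) - gradient f x - hessian f x s‖
      ≤ LH * ‖s‖ ^ 2 / 2 * 1 ^ 2 := h1'
    _ = LH / 2 * ‖s‖ ^ 2 := by ring

/-- A lower bound on the size of an inexact Newton-MR update direction in terms of the
gradient at the updated point. -/
theorem step_size_lower_bound {d : ℕ} (f : EuclideanSpace ℝ (Fin d) → ℝ)
    (LH σ Lg θ ε : ℝ) (hLH : 0 < LH) (hσ : 0 < σ) (hLg : 0 < Lg) (hθ : 0 < θ)
    (hε0 : 0 < ε) (hε1 : ε ≤ 1)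
    (hf : ContDiff ℝ 2 f)
    (hLip : ∀ x y : EuclideanSpace ℝ (Fin d), ‖hessian f x - hessian f y‖ ≤ LH * ‖x - y‖)
    (x s r : EuclideanSpace ℝ (Fin d))
    (hrdef : r = -gradient f x - hessian f x s)
    (h1 : σ * ‖r‖ ^ 2 ≤ ⟪r, hessian f x r⟫)
    (h2 : ‖hessian f x s‖ ≤ Lg * ‖s‖)
    (h3 : ‖hessian f x r‖ ≤ θ * Real.sqrt ε * ‖hessian f x s‖) :
    2 * σ / (θ * Lg + Real.sqrt (θ ^ 2 * Lg ^ 2 + 2 * σ ^ 2 * LH)) * Real.sqrt ε *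
      min (‖gradient f (x + s)‖ / ε) 1 ≤ ‖s‖ := by
  set sε := Real.sqrt ε with hsεdef
  have hsε : 0 < sε := Real.sqrt_pos.2 hε0
  have hsε2 : sε ^ 2 = ε := Real.sq_sqrt hε0.le
  set A := θ * Lg with hAdef
  have hA : 0 < A := mul_pos hθ hLg
  set B := Real.sqrt (θ ^ 2 * Lg ^ 2 + 2 * σ ^ 2 * LH) with hBdef
  have hB2 : B ^ 2 = θ ^ 2 * Lg ^ 2 + 2 * σ ^ 2 * LH := Real.sq_sqrt (by positivity)
  have hB : 0 < B := Real.sqrt_pos.2 (by positivity)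
  set c := 2 * σ / (A + B) with hcdef
  have hABpos : 0 < A + B := by linarith
  have hc : 0 < c := by positivity
  -- key identity satisfied by c
  have hB2' : B ^ 2 = A ^ 2 + 2 * σ ^ 2 * LH := by rw [hAdef]; ring_nf; ring_nf at hB2; linarith
  have hcid : c * A + LH * σ * c ^ 2 / 2 = σ := by
    rw [hcdef]
    field_simp
    linear_combination (-1) * hB2'
  set t := ‖s‖ with htdef
  have ht : 0 ≤ t := norm_nonneg s
  set G := ‖gradient f (x + s)‖ with hGdef
  have hG : 0 ≤ G := norm_nonneg _
  -- bound on the residual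
  have hr : σ * ‖r‖ ≤ A * sε * t := by
    have hcs : ⟪r, hessian f x r⟫ ≤ ‖r‖ * ‖hessian f x r‖ := real_inner_le_norm _ _
    have h4 : σ * ‖r‖ ^ 2 ≤ ‖r‖ * (θ * sε * (Lg * t)) := by
      calc σ * ‖r‖ ^ 2 ≤ ‖r‖ * ‖hessian f x r‖ := le_trans h1 hcs
        _ ≤ ‖r‖ * (θ * sε * ‖hessian f x s‖) :=
            mul_le_mul_of_nonneg_left h3 (norm_nonneg r)
        _ ≤ ‖r‖ * (θ * sε * (Lg * t)) := by
            apply mul_le_mul_of_nonneg_left _ (norm_nonneg r)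
            exact mul_le_mul_of_nonneg_left h2 (by positivity)
    rcases eq_or_lt_of_le (norm_nonneg r) with h0 | h0
    · rw [← h0, mul_zero]
      positivity
    · rw [hAdef]
      nlinarith [h4, h0]
  -- Taylor bound on the gradient at x + s
  have htay := grad_taylor f LH hf hLip x s
  have hgx : gradient f x = -r - hessian f x s := by
    rw [hrdef]; abel
  have hkey : σ * G ≤ A * sε * t + σ * (LH / 2) * t ^ 2 := by
    have hGr : G ≤ ‖r‖ + LH / 2 * t ^ 2 := by
      have : gradient f (x + s) =
          (gradient f (x + s) - gradient f x - hessian f x s) + (-r) := by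
        rw [hgx]; abel
      calc G = ‖(gradient f (x + s) - gradient f x - hessian f x s) + (-r)‖ := by
            rw [hGdef, ← this]
        _ ≤ ‖gradient f (x + s) - gradient f x - hessian f x s‖ + ‖(-r : EuclideanSpace ℝ (Fin d))‖ :=
            norm_add_le _ _
        _ ≤ LH / 2 * t ^ 2 + ‖r‖ := by rw [norm_neg]; exact add_le_add_left htay _
        _ = ‖r‖ + LH / 2 * t ^ 2 := by ring
    linarith [mul_le_mul_of_nonneg_left hGr hσ.le, hr]
  clear_value sε A B c t G
  clear hr hrdef h1 h2 h3 hLip htay hgx hf hsεdef hBdef hcdef hGdef htdef f x s r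
  -- conclude
  rcases le_or_gt (c * sε) t with hcase | hcase
  · have h8 : c * sε * min (G / ε) 1 ≤ c * sε * 1 :=
      mul_le_mul_of_nonneg_left (min_le_right _ _) (by positivity)
    rw [mul_one] at h8
    linarith
  · have hmin : min (G / ε) 1 ≤ G / ε := min_le_left _ _
    have hstep : c * sε * (G / ε) ≤ t := by
      have heq : c * sε * (G / ε) = c * G / sε := by
        rw [← hsε2]; field_simp
      rw [heq, div_le_iff₀ hsε]
      -- show c * G ≤ t * sε
      have htt : t * t ≤ c * sε * t := mul_le_mul_of_nonneg_right hcase.le ht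
      have hkey2 : c * (σ * G) ≤ c * (A * sε * t + σ * (LH / 2) * t ^ 2) :=
        mul_le_mul_of_nonneg_left hkey hc.le
      have h5 : σ * (LH / 2) * c * (t * t) ≤ σ * (LH / 2) * c * (c * sε * t) :=
        mul_le_mul_of_nonneg_left htt (by positivity)
      have h6 : (c * A + LH * σ * c ^ 2 / 2) * (sε * t) = σ * (sε * t) := by
        rw [hcid]
      have h7 : σ * (c * G) ≤ σ * (t * sε) := by linarith [hkey2, h5, h6]
      exact le_of_mul_le_mul_left (by linarith [h7]) hσ
    have h8 : c * sε * min (G / ε) 1 ≤ c * sε * (G / ε) :=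
      mul_le_mul_of_nonneg_left hmin (by positivity)
    linarith
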